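/- arXiv:2005.13427 — 3 statements merged into one kernel-verified Lean document; each statement's English description precedes it below -/
import Mathlib

section
/- Let $W: \mathbb{R}^m \to [0,\infty)$ be continuous, $\beta > 0$, and suppose $W(u) \ge \frac{c}{2}|u-a|^2$ whenever $\frac{r}{2} \le |u-a| \le r$. Let $v \in H^2([x_1,x_2];\mathbb{R}^m)$ satisfy $|v(x_1)-a| \le \epsilon < r/2$ and $|v(x_2)-a| = r$. Then $\int_{x_1}^{x_2} \left[ \frac{1}{2}|v''|^2 + \frac{\beta}{2}|v'|^2 + W(v) \right] dx \ge \sqrt{\beta c}\,(r/2)^2$. -/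
open MeasureTheory Filter Topology

open scoped RealInnerProductSpace

/-- Lower bound on the action of a map crossing the annulus `r/2 ≤ ‖u - a‖ ≤ r`:
if `‖v(x₁) - a‖ ≤ ε < r/2` and `‖v(x₂) - a‖ = r`, then
`J_{[x₁,x₂]}(v) ≥ √(βc) (r/2)²`. -/
theorem stmt3 {m : ℕ} (W : EuclideanSpace ℝ (Fin m) → ℝ) (a : EuclideanSpace ℝ (Fin m))
    (β c r ε : ℝ) (hβ : 0 < β) (hc : 0 < c) (hr : 0 < r)
    (hWcont : Continuous W) (hWnonneg : ∀ u, 0 ≤ W u)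
    (hWlow : ∀ u, r / 2 ≤ ‖u - a‖ → ‖u - a‖ ≤ r → c / 2 * ‖u - a‖ ^ 2 ≤ W u)
    (x₁ x₂ : ℝ) (hx : x₁ ≤ x₂)
    (v v' v'' : ℝ → EuclideanSpace ℝ (Fin m))
    (hv : ∀ x ∈ Set.Icc x₁ x₂, HasDerivAt v (v' x) x)
    (hv' : ∀ x ∈ Set.Icc x₁ x₂, HasDerivAt v' (v'' x) x)
    (hint : IntervalIntegrable
      (fun x => 1 / 2 * ‖v'' x‖ ^ 2 + β / 2 * ‖v' x‖ ^ 2 + W (v x)) volume x₁ x₂)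
    (hε : 0 ≤ ε) (hεr : ε < r / 2)
    (hv1 : ‖v x₁ - a‖ ≤ ε) (hv2 : ‖v x₂ - a‖ = r) :
    Real.sqrt (β * c) * (r / 2) ^ 2 ≤
      ∫ x in x₁..x₂, (1 / 2 * ‖v'' x‖ ^ 2 + β / 2 * ‖v' x‖ ^ 2 + W (v x)) := by
  have hvc : ∀ x ∈ Set.Icc x₁ x₂, ContinuousAt v x := fun x hx' => (hv x hx').continuousAt
  have hv'c : ∀ x ∈ Set.Icc x₁ x₂, ContinuousAt v' x := fun x hx' => (hv' x hx').continuousAt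
  have hfc : ContinuousOn (fun x => ‖v x - a‖) (Set.Icc x₁ x₂) := fun x hx' =>
    (((hvc x hx').sub continuousAt_const).norm).continuousWithinAt
  -- construct y₂ : first time `‖v x - a‖ = r`
  set T : Set ℝ := Set.Icc x₁ x₂ ∩ (fun x => ‖v x - a‖) ⁻¹' {r} with hT
  have hTclosed : IsClosed T := hfc.preimage_isClosed_of_isClosed isClosed_Icc isClosed_singleton
  have hx2T : x₂ ∈ T := ⟨⟨hx, le_refl _⟩, hv2⟩
  have hTbdd : BddBelow T := ⟨x₁, fun x hxT => hxT.1.1⟩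
  set y₂ := sInf T with hy₂def
  have hy₂T : y₂ ∈ T := hTclosed.csInf_mem ⟨x₂, hx2T⟩ hTbdd
  obtain ⟨⟨hy₂1, hy₂2⟩, hy₂r⟩ := hy₂T
  have hy₂r : ‖v y₂ - a‖ = r := hy₂r
  have hεr' : ‖v x₁ - a‖ ≤ r / 2 := hv1.trans hεr.le
  -- on [x₁, y₂], ‖v x - a‖ ≤ r
  have hler : ∀ x ∈ Set.Icc x₁ y₂, ‖v x - a‖ ≤ r := by
    intro x hx'
    by_contra h
    push_neg at h
    have hxy : x < y₂ := lt_of_le_of_ne hx'.2 (fun he => by rw [he] at h; exact absurd hy₂r h.ne')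
    have hsub : Set.Icc x₁ x ⊆ Set.Icc x₁ x₂ :=
      Set.Icc_subset_Icc le_rfl (hx'.2.trans hy₂2)
    have hmem : r ∈ Set.Icc (‖v x₁ - a‖) (‖v x - a‖) :=
      ⟨hεr'.trans (by linarith), h.le⟩
    obtain ⟨z, hz, hzr⟩ := intermediate_value_Icc hx'.1 (hfc.mono hsub) hmem
    have hzT : z ∈ T := ⟨hsub hz, hzr⟩
    exact absurd (csInf_le hTbdd hzT) (by push_neg; exact lt_of_le_of_lt hz.2 hxy)
  -- construct y₁ : last time before y₂ with `‖v x - a‖ = r/2`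
  set S : Set ℝ := Set.Icc x₁ y₂ ∩ (fun x => ‖v x - a‖) ⁻¹' {r / 2} with hS
  have hsub₂ : Set.Icc x₁ y₂ ⊆ Set.Icc x₁ x₂ := Set.Icc_subset_Icc le_rfl hy₂2
  have hSclosed : IsClosed S :=
    (hfc.mono hsub₂).preimage_isClosed_of_isClosed isClosed_Icc isClosed_singleton
  have hSne : S.Nonempty := by
    have hmem : r / 2 ∈ Set.Icc (‖v x₁ - a‖) (‖v y₂ - a‖) := ⟨hεr', by rw [hy₂r]; linarith⟩
    obtain ⟨z, hz, hzr⟩ := intermediate_value_Icc hy₂1 (hfc.mono hsub₂) hmem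
    exact ⟨z, hz, hzr⟩
  have hSbdd : BddAbove S := ⟨y₂, fun x hxS => hxS.1.2⟩
  set y₁ := sSup S with hy₁def
  have hy₁S : y₁ ∈ S := hSclosed.csSup_mem hSne hSbdd
  obtain ⟨⟨hy₁1, hy₁2⟩, hy₁r⟩ := hy₁S
  have hy₁r : ‖v y₁ - a‖ = r / 2 := hy₁r
  -- on [y₁, y₂], r/2 ≤ ‖v x - a‖
  have hge : ∀ x ∈ Set.Icc y₁ y₂, r / 2 ≤ ‖v x - a‖ := by
    intro x hx'
    by_contra h
    push_neg at h
    have hxy : y₁ < x := lt_of_le_of_ne hx'.1 (fun he => by rw [← he] at h; exact absurd hy₁r h.ne)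
    have hsub' : Set.Icc x y₂ ⊆ Set.Icc x₁ x₂ :=
      Set.Icc_subset_Icc (hy₁1.trans hx'.1) hy₂2
    have hmem : r / 2 ∈ Set.Icc (‖v x - a‖) (‖v y₂ - a‖) := ⟨h.le, by rw [hy₂r]; linarith⟩
    obtain ⟨z, hz, hzr⟩ := intermediate_value_Icc hx'.2 (hfc.mono hsub') hmem
    have hzS : z ∈ S := ⟨⟨hy₁1.trans (hx'.1.trans hz.1), hz.2⟩, hzr⟩
    exact absurd (le_csSup hSbdd hzS) (by push_neg; exact lt_of_lt_of_le hxy hz.1)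
  have hy₁₂ : y₁ ≤ y₂ := hy₁2
  have hsubI : Set.Icc y₁ y₂ ⊆ Set.Icc x₁ x₂ := Set.Icc_subset_Icc hy₁1 hy₂2
  set F : ℝ → ℝ := fun x => 1 / 2 * ‖v'' x‖ ^ 2 + β / 2 * ‖v' x‖ ^ 2 + W (v x) with hF
  have hF0 : ∀ x, 0 ≤ F x := fun x =>
    add_nonneg (add_nonneg (by positivity) (by positivity)) (hWnonneg _)
  -- integrability pieces
  have hFi : ∀ p q : ℝ, x₁ ≤ p → p ≤ q → q ≤ x₂ → IntervalIntegrable F volume p q := by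
    intro p q h1 h2 h3
    apply hint.mono_set
    rw [Set.uIcc_of_le h2, Set.uIcc_of_le hx]
    exact Set.Icc_subset_Icc h1 h3
  set s := Real.sqrt (β * c) with hs
  have hs0 : 0 ≤ s := Real.sqrt_nonneg _
  set G : ℝ → ℝ := fun x => s * (‖v x - a‖ * ‖v' x‖) with hG
  have hGc : ContinuousOn G (Set.Icc y₁ y₂) := by
    intro x hx'
    have hx'' := hsubI hx'
    exact (continuousAt_const.mul
      ((((hvc x hx'').sub continuousAt_const).norm).mul ((hv'c x hx'').norm))).continuousWithinAt
  have hGi : IntervalIntegrable G volume y₁ y₂ := by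
    have hGc' : ContinuousOn G (Set.uIcc y₁ y₂) := by rwa [Set.uIcc_of_le hy₁₂]
    exact hGc'.intervalIntegrable
  set D : ℝ → ℝ := fun x => 2 * ⟪v x - a, v' x⟫ with hD
  have hDc : ContinuousOn D (Set.Icc y₁ y₂) := by
    intro x hx'
    have hx'' := hsubI hx'
    exact (continuousAt_const.mul
      (((hvc x hx'').sub continuousAt_const).inner (hv'c x hx''))).continuousWithinAt
  have hDi : IntervalIntegrable D volume y₁ y₂ := by
    have hDc' : ContinuousOn D (Set.uIcc y₁ y₂) := by rwa [Set.uIcc_of_le hy₁₂]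
    exact hDc'.intervalIntegrable
  -- FTC for ‖v x - a‖²
  have hderiv : ∀ x ∈ Set.uIcc y₁ y₂, HasDerivAt (fun t => ‖v t - a‖ ^ 2) (D x) x := by
    intro x hx'
    rw [Set.uIcc_of_le hy₁₂] at hx'
    have hx'' := hsubI hx'
    have h1 : HasDerivAt (fun t => v t - a) (v' x) x := (hv x hx'').sub_const a
    have h2 := h1.inner ℝ h1
    simp only [real_inner_self_eq_norm_sq] at h2
    have he : D x = ⟪v x - a, v' x⟫ + ⟪v' x, v x - a⟫ := by
      simp only [hD]
      rw [real_inner_comm (v' x) (v x - a)]; ring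
    rw [he]
    exact h2
  have hFTC : ∫ x in y₁..y₂, D x = r ^ 2 - (r / 2) ^ 2 := by
    rw [intervalIntegral.integral_eq_sub_of_hasDerivAt hderiv hDi, hy₂r, hy₁r]
  -- pointwise: (s/2) * D ≤ G on [y₁, y₂]
  have hpt1 : ∀ x ∈ Set.Icc y₁ y₂, s / 2 * D x ≤ G x := by
    intro x hx'
    have := real_inner_le_norm (v x - a) (v' x)
    simp only [hD, hG]
    nlinarith [this, hs0]
  -- pointwise: G ≤ F on [y₁, y₂]
  have hpt2 : ∀ x ∈ Set.Icc y₁ y₂, G x ≤ F x := by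
    intro x hx'
    have hu1 : r / 2 ≤ ‖v x - a‖ := hge x hx'
    have hu2 : ‖v x - a‖ ≤ r := hler x ⟨hy₁1.trans hx'.1, hx'.2⟩
    have hW := hWlow (v x) hu1 hu2
    have hsm : Real.sqrt β * Real.sqrt c = s := (Real.sqrt_mul hβ.le c).symm
    have hb2 : Real.sqrt β ^ 2 = β := Real.sq_sqrt hβ.le
    have hc2 : Real.sqrt c ^ 2 = c := Real.sq_sqrt hc.le
    simp only [hG, hF]
    have expand : (Real.sqrt β * ‖v' x‖ - Real.sqrt c * ‖v x - a‖) ^ 2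
        = β * ‖v' x‖ ^ 2 - 2 * (s * (‖v x - a‖ * ‖v' x‖)) + c * ‖v x - a‖ ^ 2 := by
      linear_combination (‖v' x‖ ^ 2) * hb2 + (‖v x - a‖ ^ 2) * hc2
        - 2 * (‖v x - a‖ * ‖v' x‖) * hsm
    have key : 2 * (s * (‖v x - a‖ * ‖v' x‖)) ≤ β * ‖v' x‖ ^ 2 + c * ‖v x - a‖ ^ 2 := by
      linarith [sq_nonneg (Real.sqrt β * ‖v' x‖ - Real.sqrt c * ‖v x - a‖), expand]
    linarith [key, hW, sq_nonneg ‖v'' x‖]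
  -- chain of integral inequalities
  have hI1 : s / 2 * (r ^ 2 - (r / 2) ^ 2) ≤ ∫ x in y₁..y₂, G x := by
    have := intervalIntegral.integral_mono_on hy₁₂ (hDi.const_mul (s / 2)) hGi hpt1
    rwa [intervalIntegral.integral_const_mul, hFTC] at this
  have hI2 : (∫ x in y₁..y₂, G x) ≤ ∫ x in y₁..y₂, F x :=
    intervalIntegral.integral_mono_on hy₁₂ hGi (hFi y₁ y₂ hy₁1 hy₁₂ hy₂2) hpt2
  have hI3 : (∫ x in y₁..y₂, F x) ≤ ∫ x in x₁..x₂, F x := by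
    have ha : IntervalIntegrable F volume x₁ y₁ := hFi x₁ y₁ le_rfl hy₁1 (hy₁₂.trans hy₂2)
    have hb : IntervalIntegrable F volume y₁ y₂ := hFi y₁ y₂ hy₁1 hy₁₂ hy₂2
    have hcc : IntervalIntegrable F volume y₂ x₂ := hFi y₂ x₂ (hy₁1.trans hy₁₂) hy₂2 le_rfl
    have e1 : (∫ x in x₁..y₂, F x) + ∫ x in y₂..x₂, F x = ∫ x in x₁..x₂, F x :=
      intervalIntegral.integral_add_adjacent_intervals (ha.trans hb) hcc
    have e2 : (∫ x in x₁..y₁, F x) + ∫ x in y₁..y₂, F x = ∫ x in x₁..y₂, F x :=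
      intervalIntegral.integral_add_adjacent_intervals ha hb
    have n1 : 0 ≤ ∫ x in x₁..y₁, F x :=
      intervalIntegral.integral_nonneg hy₁1 (fun u _ => hF0 u)
    have n2 : 0 ≤ ∫ x in y₂..x₂, F x :=
      intervalIntegral.integral_nonneg hy₂2 (fun u _ => hF0 u)
    linarith
  have hfinal : s * (r / 2) ^ 2 ≤ s / 2 * (r ^ 2 - (r / 2) ^ 2) := by nlinarith [hs0, sq_nonneg r]
  calc s * (r / 2) ^ 2 ≤ s / 2 * (r ^ 2 - (r / 2) ^ 2) := hfinal
    _ ≤ ∫ x in y₁..y₂, G x := hI1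
    _ ≤ ∫ x in y₁..y₂, F x := hI2
    _ ≤ ∫ x in x₁..x₂, F x := hI3
end

section
/- Let $H$ be a Hilbert space, $F \subset H$ a set such that every bounded sequence in $F$ has a subsequence converging in $H$ to an element of $F$, and suppose for each $v$ the distance $d(v,F)$ is attained. Let $v_k \rightharpoonup v$ weakly in $H$, and let $e_k \in F$ with $\|v_k - e_k\| = d(v_k, F)$ and $e_k \to e$ strongly in $H$. Then $\|v - e\| = d(v, F)$. -/
open MeasureTheory Filter Topology

/-- Weak-strong limit of nearest points: if `v_k ⇀ v` weakly, `e_k ∈ F` realizes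
`d(v_k, F)`, and `e_k → e` strongly, then `e` realizes `d(v, F)`. -/
theorem stmt10 {H : Type*} [NormedAddCommGroup H] [InnerProductSpace ℝ H] [CompleteSpace H]
    (F : Set H)
    (hcpt : ∀ u : ℕ → H, (∀ k, u k ∈ F) → Bornology.IsBounded (Set.range u) →
      ∃ (e₀ : H) (φ : ℕ → ℕ), e₀ ∈ F ∧ StrictMono φ ∧ Tendsto (u ∘ φ) atTop (𝓝 e₀))
    (hattain : ∀ v : H, ∃ f ∈ F, ‖v - f‖ = Metric.infDist v F)
    (v : H) (vk : ℕ → H)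
    (hweak : ∀ y : H, Tendsto (fun k => (inner ℝ (vk k) y : ℝ)) atTop (𝓝 (inner ℝ v y : ℝ)))
    (ek : ℕ → H) (hek : ∀ k, ek k ∈ F)
    (hproj : ∀ k, ‖vk k - ek k‖ = Metric.infDist (vk k) F)
    (e : H) (he : Tendsto ek atTop (𝓝 e)) :
    ‖v - e‖ = Metric.infDist v F := by
  -- e ∈ F
  have heF : e ∈ F := by
    obtain ⟨e₀, φ, he₀, hφ, hlim⟩ := hcpt ek hek (Metric.isBounded_range_of_tendsto ek he)
    have : Tendsto (ek ∘ φ) atTop (𝓝 e) := he.comp hφ.tendsto_atTop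
    rwa [tendsto_nhds_unique hlim this] at he₀
  -- boundedness of vk via Banach–Steinhaus
  obtain ⟨C, hC⟩ : ∃ C : ℝ, ∀ k, ‖vk k‖ ≤ C := by
    have h := banach_steinhaus (E := H) (F := ℝ) (g := fun k => innerSL ℝ (vk k)) ?_
    · obtain ⟨C', hC'⟩ := h
      exact ⟨C', fun k => by simpa [innerSL_apply_norm] using hC' k⟩
    · intro x
      obtain ⟨M, hM⟩ := ((hweak x).norm).bddAbove_range
      exact ⟨M, fun k => hM ⟨k, rfl⟩⟩
  have hC0 : 0 ≤ C := le_trans (norm_nonneg _) (hC 0)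
  -- inner (vk k) (ek k) → inner v e
  have hinner : Tendsto (fun k => (inner ℝ (vk k) (ek k) : ℝ)) atTop (𝓝 (inner ℝ v e)) := by
    have h1 : Tendsto (fun k => (inner ℝ (vk k) (ek k - e) : ℝ)) atTop (𝓝 0) := by
      apply squeeze_zero_norm (a := fun k => C * ‖ek k - e‖)
      · intro k
        calc ‖(inner ℝ (vk k) (ek k - e) : ℝ)‖ ≤ ‖vk k‖ * ‖ek k - e‖ := norm_inner_le_norm _ _
          _ ≤ C * ‖ek k - e‖ := by
            exact mul_le_mul_of_nonneg_right (hC k) (norm_nonneg _)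
      · have : Tendsto (fun k => ek k - e) atTop (𝓝 0) := by
          simpa using he.sub_const e
        simpa using (this.norm.const_mul C)
    have h2 := hweak e
    have := h1.add h2
    simp only [zero_add] at this
    convert this using 2 with k
    rw [← inner_add_right]
    congr 1
    abel
  -- key inequality in the limit
  have key : ∀ f ∈ F, ‖v - e‖ ^ 2 ≤ ‖v - f‖ ^ 2 := by
    intro f hf
    have hk : ∀ k, ‖ek k‖ ^ 2 - 2 * inner ℝ (vk k) (ek k) ≤ ‖f‖ ^ 2 - 2 * inner ℝ (vk k) f := by
      intro k
      have h1 : ‖vk k - ek k‖ ≤ ‖vk k - f‖ := by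
        rw [hproj k]
        simpa [dist_eq_norm] using Metric.infDist_le_dist_of_mem (x := vk k) hf
      have h2 : ‖vk k - ek k‖ ^ 2 ≤ ‖vk k - f‖ ^ 2 :=
        pow_le_pow_left₀ (norm_nonneg _) h1 2
      rw [norm_sub_sq_real, norm_sub_sq_real] at h2
      linarith
    have hl : Tendsto (fun k => ‖ek k‖ ^ 2 - 2 * (inner ℝ (vk k) (ek k) : ℝ)) atTop
        (𝓝 (‖e‖ ^ 2 - 2 * inner ℝ v e)) :=
      ((he.norm.pow 2).sub ((hinner.const_mul 2)))
    have hr : Tendsto (fun k => ‖f‖ ^ 2 - 2 * (inner ℝ (vk k) f : ℝ)) atTop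
        (𝓝 (‖f‖ ^ 2 - 2 * inner ℝ v f)) :=
      (tendsto_const_nhds.sub ((hweak f).const_mul 2))
    have hle : ‖e‖ ^ 2 - 2 * (inner ℝ v e : ℝ) ≤ ‖f‖ ^ 2 - 2 * inner ℝ v f :=
      le_of_tendsto_of_tendsto' hl hr hk
    rw [norm_sub_sq_real, norm_sub_sq_real]
    linarith
  refine le_antisymm ?_ ?_
  · by_contra hlt
    push_neg at hlt
    obtain ⟨f, hf, hdf⟩ := (Metric.infDist_lt_iff ⟨e, heF⟩).mp hlt
    rw [dist_eq_norm] at hdf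
    have := (pow_le_pow_iff_left₀ (norm_nonneg (v - e)) (norm_nonneg (v - f)) (by norm_num)).mp (key f hf)
    linarith
  · simpa [dist_eq_norm] using Metric.infDist_le_dist_of_mem heF
end

section
/- With $z$ as in the piecewise construction (context), assume $|v_0 - a| \le \epsilon/8$ and $|v_1| \le \epsilon/4$ with $0 < \epsilon < r/2$, and assume $W(u) \le \frac{\mu}{2}|u-a|^2$ for $|u-a| \le r$. Then for all $x \le \lambda$: $|z(x)-a| \le \epsilon/4$, $|z'(x)| \le \epsilon$, $|z''(x)| \le 2\epsilon$, and $\int_{-\infty}^{\lambda} [\frac{1}{2}|z''|^2 + \frac{\beta}{2}|z'|^2 + W(z)]\,dx \le (4 + \beta + \mu)\epsilon^2$. -/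
open MeasureTheory Filter Topology

set_option maxHeartbeats 1000000

/-- Estimates on the comparison map `z`: if `‖v₀ - a‖ ≤ ε/8`, `‖v₁‖ ≤ ε/4`,
`0 < ε < r/2` and `W(u) ≤ (μ/2)‖u-a‖²` on `‖u-a‖ ≤ r`, then
`‖z-a‖ ≤ ε/4`, `‖z'‖ ≤ ε`, `‖z''‖ ≤ 2ε` on `(-∞,λ]`, and
`∫_{-∞}^{λ} [½|z''|² + β/2|z'|² + W(z)] ≤ (4+β+μ)ε²`. -/
theorem stmt13 {m : ℕ} (W : EuclideanSpace ℝ (Fin m) → ℝ)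
    (a v₀ v₁ : EuclideanSpace ℝ (Fin m)) (lam β μ r ε : ℝ)
    (hβ : 0 < β) (hμ : 0 < μ) (hr : 0 < r) (hε : 0 < ε) (hεr : ε < r / 2)
    (hWcont : Continuous W) (hWnonneg : ∀ u, 0 ≤ W u)
    (hWup : ∀ u, ‖u - a‖ ≤ r → W u ≤ μ / 2 * ‖u - a‖ ^ 2)
    (hv₀ : ‖v₀ - a‖ ≤ ε / 8) (hv₁ : ‖v₁‖ ≤ ε / 4)
    (z z' z'' : ℝ → EuclideanSpace ℝ (Fin m))
    (hz : z = fun x =>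
      if x ≤ lam - 2 then a
      else if x ≤ lam - 1 then
        (v₀ - (1 / 2 : ℝ) • v₁) +
          (2 * (x - lam + 1) ^ 2 - (x - lam + 1) ^ 4) • (a - (v₀ - (1 / 2 : ℝ) • v₁))
      else v₀ + ((x - lam) + (x - lam) ^ 2 / 2) • v₁)
    (hz' : z' = fun x =>
      if x ≤ lam - 2 then 0
      else if x ≤ lam - 1 then
        (4 * (x - lam + 1) - 4 * (x - lam + 1) ^ 3) • (a - (v₀ - (1 / 2 : ℝ) • v₁))
      else (1 + (x - lam)) • v₁)
    (hz'' : z'' = fun x =>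
      if x ≤ lam - 2 then 0
      else if x ≤ lam - 1 then
        (4 - 12 * (x - lam + 1) ^ 2) • (a - (v₀ - (1 / 2 : ℝ) • v₁))
      else v₁) :
    (∀ x ≤ lam, ‖z x - a‖ ≤ ε / 4 ∧ ‖z' x‖ ≤ ε ∧ ‖z'' x‖ ≤ 2 * ε) ∧
      ∫ x in Set.Iic lam, (1 / 2 * ‖z'' x‖ ^ 2 + β / 2 * ‖z' x‖ ^ 2 + W (z x)) ≤
        (4 + β + μ) * ε ^ 2 := by

  subst hz hz' hz''
  set φ₀ : EuclideanSpace ℝ (Fin m) := v₀ - (1 / 2 : ℝ) • v₁ with hφ₀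
  have hφ : ‖φ₀ - a‖ ≤ ε / 4 := by
    have he : φ₀ - a = (v₀ - a) + (-(1/2 : ℝ)) • v₁ := by rw [hφ₀]; module
    rw [he]
    calc ‖(v₀ - a) + (-(1/2 : ℝ)) • v₁‖ ≤ ‖v₀ - a‖ + ‖(-(1/2 : ℝ)) • v₁‖ := norm_add_le _ _
      _ ≤ ε/8 + (1/2) * (ε/4) := by
          rw [norm_smul]
          gcongr
          simpa using le_rfl
      _ = ε/4 := by ring
  have hpt : ∀ x ≤ lam, ‖(if x ≤ lam - 2 then a
      else if x ≤ lam - 1 then φ₀ + (2 * (x - lam + 1) ^ 2 - (x - lam + 1) ^ 4) • (a - φ₀)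
      else v₀ + ((x - lam) + (x - lam) ^ 2 / 2) • v₁) - a‖ ≤ ε / 4 ∧
      ‖(if x ≤ lam - 2 then (0 : EuclideanSpace ℝ (Fin m))
      else if x ≤ lam - 1 then (4 * (x - lam + 1) - 4 * (x - lam + 1) ^ 3) • (a - φ₀)
      else (1 + (x - lam)) • v₁)‖ ≤ ε ∧
      ‖(if x ≤ lam - 2 then (0 : EuclideanSpace ℝ (Fin m))
      else if x ≤ lam - 1 then (4 - 12 * (x - lam + 1) ^ 2) • (a - φ₀)
      else v₁)‖ ≤ 2 * ε := by
    intro x hx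
    by_cases h1 : x ≤ lam - 2
    · simp only [if_pos h1, sub_self, norm_zero]
      refine ⟨by linarith, by linarith, by linarith⟩
    · by_cases h2 : x ≤ lam - 1
      · simp only [if_neg h1, if_pos h2]
        push_neg at h1
        set t : ℝ := x - lam + 1 with ht
        have ht1 : -1 < t := by simp [ht]; linarith
        have ht2 : t ≤ 0 := by simp [ht]; linarith
        have ht3 : t^2 ≤ 1 := by nlinarith
        refine ⟨?_, ?_, ?_⟩
        · have he : φ₀ + (2 * t ^ 2 - t ^ 4) • (a - φ₀) - a
              = (1 - (2 * t ^ 2 - t ^ 4)) • (φ₀ - a) := by module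
          rw [he, norm_smul, Real.norm_eq_abs]
          have hc : |1 - (2 * t ^ 2 - t ^ 4)| ≤ 1 := by
            rw [abs_le]; constructor <;> nlinarith
          calc |1 - (2 * t ^ 2 - t ^ 4)| * ‖φ₀ - a‖ ≤ 1 * (ε/4) := by
                apply mul_le_mul hc hφ (norm_nonneg _) zero_le_one
            _ = ε/4 := by ring
        · rw [norm_smul, Real.norm_eq_abs]
          have hc : |4 * t - 4 * t ^ 3| ≤ 4 := by
            rw [abs_le]; constructor <;> nlinarith
          have hn : ‖a - φ₀‖ ≤ ε / 4 := by rw [norm_sub_rev]; exact hφ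
          calc |4 * t - 4 * t ^ 3| * ‖a - φ₀‖ ≤ 4 * (ε/4) := by
                apply mul_le_mul hc hn (norm_nonneg _) (by norm_num)
            _ = ε := by ring
        · rw [norm_smul, Real.norm_eq_abs]
          have hc : |4 - 12 * t ^ 2| ≤ 8 := by
            rw [abs_le]; constructor <;> nlinarith
          have hn : ‖a - φ₀‖ ≤ ε / 4 := by rw [norm_sub_rev]; exact hφ
          calc |4 - 12 * t ^ 2| * ‖a - φ₀‖ ≤ 8 * (ε/4) := by
                apply mul_le_mul hc hn (norm_nonneg _) (by norm_num)
            _ = 2 * ε := by ring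
      · simp only [if_neg h1, if_neg h2]
        push_neg at h1 h2
        set s : ℝ := x - lam with hs
        have hs1 : -1 < s := by simp [hs]; linarith
        have hs2 : s ≤ 0 := by simp [hs]; linarith
        refine ⟨?_, ?_, ?_⟩
        · have he : v₀ + (s + s ^ 2 / 2) • v₁ - a = (v₀ - a) + (s + s ^ 2 / 2) • v₁ := by module
          rw [he]
          have hc : |s + s ^ 2 / 2| ≤ 1/2 := by
            rw [abs_le]; constructor <;> nlinarith
          calc ‖(v₀ - a) + (s + s ^ 2 / 2) • v₁‖ ≤ ‖v₀ - a‖ + ‖(s + s ^ 2 / 2) • v₁‖ :=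
                norm_add_le _ _
            _ ≤ ε/8 + (1/2) * (ε/4) := by
                rw [norm_smul, Real.norm_eq_abs]
                have := mul_le_mul hc hv₁ (norm_nonneg _) (by norm_num : (0:ℝ) ≤ 1/2)
                gcongr <;> linarith
            _ = ε/4 := by ring
        · rw [norm_smul, Real.norm_eq_abs]
          have hc : |1 + s| ≤ 1 := by rw [abs_le]; constructor <;> linarith
          calc |1 + s| * ‖v₁‖ ≤ 1 * (ε/4) :=
                mul_le_mul hc hv₁ (norm_nonneg _) zero_le_one
            _ ≤ ε := by linarith
        · calc ‖v₁‖ ≤ ε/4 := hv₁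
            _ ≤ 2 * ε := by linarith
  refine ⟨hpt, ?_⟩
  set z : ℝ → EuclideanSpace ℝ (Fin m) := fun x =>
      if x ≤ lam - 2 then a
      else if x ≤ lam - 1 then φ₀ + (2 * (x - lam + 1) ^ 2 - (x - lam + 1) ^ 4) • (a - φ₀)
      else v₀ + ((x - lam) + (x - lam) ^ 2 / 2) • v₁ with hzdef
  set z' : ℝ → EuclideanSpace ℝ (Fin m) := fun x =>
      if x ≤ lam - 2 then 0
      else if x ≤ lam - 1 then (4 * (x - lam + 1) - 4 * (x - lam + 1) ^ 3) • (a - φ₀)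
      else (1 + (x - lam)) • v₁ with hz'def
  set z'' : ℝ → EuclideanSpace ℝ (Fin m) := fun x =>
      if x ≤ lam - 2 then 0
      else if x ≤ lam - 1 then (4 - 12 * (x - lam + 1) ^ 2) • (a - φ₀)
      else v₁ with hz''def
  set f : ℝ → ℝ := fun x => 1 / 2 * ‖z'' x‖ ^ 2 + β / 2 * ‖z' x‖ ^ 2 + W (z x) with hfdef
  have hWa : W a = 0 := by
    have h := hWup a (by simp [hr.le])
    have h2 := hWnonneg a
    simp at h
    linarith
  have hfnonneg : ∀ x, 0 ≤ f x := by
    intro x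
    have := hWnonneg (z x)
    have h1 : (0:ℝ) ≤ ‖z'' x‖ ^ 2 := sq_nonneg _
    have h2 : (0:ℝ) ≤ ‖z' x‖ ^ 2 := sq_nonneg _
    simp only [hfdef]
    nlinarith
  have hzero : Set.EqOn f (fun _ => (0:ℝ)) (Set.Iic (lam - 2)) := by
    intro x hx
    have hx' : x ≤ lam - 2 := hx
    simp only [hfdef, hzdef, hz'def, hz''def]
    rw [if_pos hx', if_pos hx', if_pos hx']
    simp [hWa]
  have hct : Continuous (fun x : ℝ => x - lam + 1) :=
    (continuous_id.sub continuous_const).add continuous_const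
  have hcs : Continuous (fun x : ℝ => x - lam) := continuous_id.sub continuous_const
  have hmz : Measurable z := by
    apply Measurable.ite (measurableSet_le measurable_id measurable_const) measurable_const
    apply Measurable.ite (measurableSet_le measurable_id measurable_const)
    · exact (continuous_const.add
        (((continuous_const.mul (hct.pow 2)).sub (hct.pow 4)).smul continuous_const)).measurable
    · exact (continuous_const.add
        ((hcs.add ((hcs.pow 2).div_const 2)).smul continuous_const)).measurable
  have hmz' : Measurable z' := by
    apply Measurable.ite (measurableSet_le measurable_id measurable_const) measurable_const
    apply Measurable.ite (measurableSet_le measurable_id measurable_const)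
    · exact (((continuous_const.mul hct).sub
        (continuous_const.mul (hct.pow 3))).smul continuous_const).measurable
    · exact ((continuous_const.add hcs).smul continuous_const).measurable
  have hmz'' : Measurable z'' := by
    apply Measurable.ite (measurableSet_le measurable_id measurable_const) measurable_const
    apply Measurable.ite (measurableSet_le measurable_id measurable_const)
    · exact ((continuous_const.sub
        (continuous_const.mul (hct.pow 2))).smul continuous_const).measurable
    · exact measurable_const
  have hmf : Measurable f := by
    apply Measurable.add
    apply Measurable.add
    · exact (measurable_const.mul ((hmz''.norm).pow measurable_const))
    · exact (measurable_const.mul ((hmz'.norm).pow measurable_const))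
    · exact hWcont.measurable.comp hmz
  have hC : ∀ x ∈ Set.Ioc (lam - 2) lam, f x ≤ (2 + β/2 + μ/2) * ε ^ 2 := by
    intro x hx
    obtain ⟨h1, h2, h3⟩ := hpt x hx.2
    have h1' : ‖z x - a‖ ≤ ε / 4 := h1
    have h2'' : ‖z' x‖ ≤ ε := h2
    have h3'' : ‖z'' x‖ ≤ 2 * ε := h3
    have hr4 : ‖z x - a‖ ≤ r := h1'.trans (by linarith)
    have hW := hWup (z x) hr4
    have hsq : ‖z x - a‖ ^ 2 ≤ (ε / 4) ^ 2 := pow_le_pow_left₀ (norm_nonneg _) h1' 2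
    have hW2 : W (z x) ≤ μ / 2 * ε ^ 2 := by nlinarith [sq_nonneg ε]
    have h2' : ‖z'' x‖ ^ 2 ≤ 4 * ε ^ 2 := by nlinarith [norm_nonneg (z'' x)]
    have h3' : ‖z' x‖ ^ 2 ≤ ε ^ 2 := by nlinarith [norm_nonneg (z' x)]
    simp only [hfdef]
    nlinarith
  have hint1 : IntegrableOn f (Set.Iic (lam - 2)) := by
    rw [integrableOn_congr_fun hzero measurableSet_Iic]
    exact integrableOn_zero
  have hint2 : IntegrableOn f (Set.Ioc (lam - 2) lam) := by
    apply Measure.integrableOn_of_bounded (M := (2 + β/2 + μ/2) * ε ^ 2)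
        measure_Ioc_lt_top.ne hmf.aestronglyMeasurable
    filter_upwards [ae_restrict_mem measurableSet_Ioc] with x hx
    rw [Real.norm_eq_abs, abs_of_nonneg (hfnonneg x)]
    exact hC x hx
  have hsplit : Set.Iic lam = Set.Iic (lam - 2) ∪ Set.Ioc (lam - 2) lam :=
    (Set.Iic_union_Ioc_eq_Iic (by linarith)).symm
  have h0 : ∫ x in Set.Iic (lam - 2), f x = 0 := by
    rw [setIntegral_congr_fun measurableSet_Iic hzero]
    simp
  have e1 : ∫ x in Set.Iic lam, f x = ∫ x in Set.Ioc (lam - 2) lam, f x := by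
    rw [hsplit, setIntegral_union (Set.Iic_disjoint_Ioc le_rfl) measurableSet_Ioc hint1 hint2,
      h0, zero_add]
  have e2 : ∫ x in Set.Ioc (lam - 2) lam, f x ≤ 2 * ((2 + β/2 + μ/2) * ε ^ 2) := by
    calc ∫ x in Set.Ioc (lam - 2) lam, f x
        ≤ ∫ _ in Set.Ioc (lam - 2) lam, ((2 + β/2 + μ/2) * ε ^ 2) :=
          setIntegral_mono_on hint2 (integrableOn_const measure_Ioc_lt_top.ne)
            measurableSet_Ioc hC
      _ = 2 * ((2 + β/2 + μ/2) * ε ^ 2) := by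
          rw [setIntegral_const, Real.volume_real_Ioc, smul_eq_mul,
            show lam - (lam - 2) = 2 by ring]
          norm_num
  have e3 : ∫ x in Set.Iic lam, f x ≤ (4 + β + μ) * ε ^ 2 := by
    rw [e1]
    nlinarith [e2]
  exact e3
end
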